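/- Each single rewriting step 02 → 10 or 12 → 20 applied to a hyperbinary expansion strictly increases the expansion in the shortlex order (sort first by length, then lexicographically). Consequently the rewriting system on the expansions of any fixed n is terminating. -/

import Mathlib

/-- The integer represented by a word of digits (most significant first). -/
def hval (w : List ℕ) : ℕ := w.foldl (fun a d => 2 * a + d) 0

/-- `w` is a hyperbinary expansion of `n`: digits in {0,1,2}, nonzero leading
digit, representing `n`.  (The empty word is the unique expansion of `0`.) -/
def IsHyp (n : ℕ) (w : List ℕ) : Prop :=
  (∀ d ∈ w, d ≤ 2) ∧ w.head? ≠ some 0 ∧ hval w = n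

/-- `b n`: the number of hyperbinary expansions of `n` (so `b 0 = 1`). -/
noncomputable def hb (n : ℕ) : ℕ := Set.ncard {w : List ℕ | IsHyp n w}

/-- A single rewriting step: `02 → 10` or `12 → 20`, a leading `2` treated as `02`. -/
def Step (u v : List ℕ) : Prop :=
  (∃ x y : List ℕ, u = x ++ [0, 2] ++ y ∧ v = x ++ [1, 0] ++ y) ∨
  (∃ x y : List ℕ, u = x ++ [1, 2] ++ y ∧ v = x ++ [2, 0] ++ y) ∨
  (∃ y : List ℕ, u = 2 :: y ∧ v = 1 :: 0 :: y)

/-- Strict shortlex order: first by length, then lexicographically. -/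
def Shortlex (u v : List ℕ) : Prop :=
  u.length < v.length ∨ (u.length = v.length ∧ List.Lex (· < ·) u v)

/-- Number of maximal blocks of consecutive `2`'s in a word. -/
def blocks2 : List ℕ → ℕ
  | [] => 0
  | d :: rest => blocks2 rest + (if d = 2 ∧ rest.head? ≠ some 2 then 1 else 0)

/-- Base-3 value of a word. -/
def mval (w : List ℕ) : ℕ := w.foldl (fun a d => 3 * a + d) 0

lemma lex_append (x : List ℕ) {u v : List ℕ} (h : List.Lex (· < ·) u v) :
    List.Lex (· < ·) (x ++ u) (x ++ v) := by
  induction x with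
  | nil => simpa using h
  | cons a x ih => exact List.Lex.cons ih

lemma mfold_lt {a b : ℕ} (y : List ℕ) (h : a < b) :
    List.foldl (fun a d => 3 * a + d) a y < List.foldl (fun a d => 3 * a + d) b y := by
  induction y generalizing a b with
  | nil => exact h
  | cons d y ih => exact ih (show 3*a+d < 3*b+d by omega)

lemma mfold_append (x y : List ℕ) (a : ℕ) :
    List.foldl (fun a d => 3 * a + d) a (x ++ y)
      = List.foldl (fun a d => 3 * a + d) (List.foldl (fun a d => 3 * a + d) a x) y :=
  List.foldl_append ..

lemma step_mval {u v : List ℕ} (h : Step u v) : mval u < mval v := by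
  unfold mval
  rcases h with ⟨x, y, hu, hv⟩ | ⟨x, y, hu, hv⟩ | ⟨y, hu, hv⟩
  · subst hu hv
    simp only [List.append_assoc, List.cons_append, List.nil_append,
      List.foldl_append, List.foldl_cons]
    exact mfold_lt y (by omega)
  · subst hu hv
    simp only [List.append_assoc, List.cons_append, List.nil_append,
      List.foldl_append, List.foldl_cons]
    exact mfold_lt y (by omega)
  · subst hu hv
    simp only [List.foldl_cons]
    exact mfold_lt y (by norm_num)

lemma mfold_bound (w : List ℕ) (a : ℕ) (h : ∀ d ∈ w, d ≤ 2) :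
    List.foldl (fun a d => 3 * a + d) a w < (a + 1) * 3 ^ w.length := by
  induction w generalizing a with
  | nil => simp
  | cons d t ih =>
    have hd : d ≤ 2 := h d (by simp)
    have := ih (3 * a + d) (fun e he => h e (by simp [he]))
    calc List.foldl (fun a d => 3 * a + d) (3 * a + d) t
        < (3 * a + d + 1) * 3 ^ t.length := this
      _ ≤ (a + 1) * 3 ^ (d :: t).length := by
          simp [List.length_cons, pow_succ]; nlinarith

lemma hfold_ge (t : List ℕ) (a : ℕ) :
    2 ^ t.length * a ≤ List.foldl (fun a d => 2 * a + d) a t := by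
  induction t generalizing a with
  | nil => simp
  | cons d t ih =>
    have := ih (2 * a + d)
    calc 2 ^ (d :: t).length * a = 2 ^ t.length * (2 * a) := by
          simp [List.length_cons, pow_succ]; ring
      _ ≤ 2 ^ t.length * (2 * a + d) := by
          exact Nat.mul_le_mul_left _ (by omega)
      _ ≤ _ := this

lemma len_le {n : ℕ} {w : List ℕ} (h : IsHyp n w) : w.length ≤ n := by
  obtain ⟨hd, hh, hv⟩ := h
  cases w with
  | nil => simp
  | cons d t =>
    have hd0 : d ≠ 0 := by
      intro h0; exact hh (by simp [h0])
    have h1 : 2 ^ t.length * d ≤ n := by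
      rw [← hv]
      unfold hval
      simpa using hfold_ge t d
    have h2 : t.length < 2 ^ t.length := Nat.lt_two_pow_self
    have : 2 ^ t.length ≤ 2 ^ t.length * d := Nat.le_mul_of_pos_right _ (by omega)
    simp only [List.length_cons]
    omega

theorem stmt14 :
    (∀ u v : List ℕ, Step u v → Shortlex u v) ∧
    ∀ n : ℕ, ¬∃ f : ℕ → List ℕ,
      (∀ i : ℕ, IsHyp n (f i)) ∧ ∀ i : ℕ, Step (f i) (f (i + 1)) := by
  constructor
  · intro u v h
    rcases h with ⟨x, y, hu, hv⟩ | ⟨x, y, hu, hv⟩ | ⟨y, hu, hv⟩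
    · subst hu hv
      refine Or.inr ⟨by simp, ?_⟩
      rw [show x ++ [0, 2] ++ y = x ++ (0 :: 2 :: y) by simp,
          show x ++ [1, 0] ++ y = x ++ (1 :: 0 :: y) by simp]
      exact lex_append x (List.Lex.rel (by norm_num))
    · subst hu hv
      refine Or.inr ⟨by simp, ?_⟩
      rw [show x ++ [1, 2] ++ y = x ++ (1 :: 2 :: y) by simp,
          show x ++ [2, 0] ++ y = x ++ (2 :: 0 :: y) by simp]
      exact lex_append x (List.Lex.rel (by norm_num))
    · subst hu hv
      exact Or.inl (by simp)
  · intro n ⟨f, hhyp, hstep⟩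
    have hmono : ∀ i, i ≤ mval (f i) := by
      intro i
      induction i with
      | zero => exact Nat.zero_le _
      | succ i ih =>
        have := step_mval (hstep i)
        omega
    have hbound : ∀ i, mval (f i) < 3 ^ n := by
      intro i
      have h1 : mval (f i) < 3 ^ (f i).length :=
        by simpa [mval] using mfold_bound (f i) 0 (hhyp i).1
      have h2 : (f i).length ≤ n := len_le (hhyp i)
      exact h1.trans_le (Nat.pow_le_pow_right (by norm_num) h2)
    have := hmono (3 ^ n)
    have := hbound (3 ^ n)
    omega
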